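/- Suppose the common distribution F of the X_i is continuous (atomless), and let n ≥ 2 and r > 0. If there exist λ > r/(n−1) and a constant C > 0 such that q(h) ≤ C·h^λ for all h ∈ (0,1], then E|T_n|^r < ∞. -/

import Mathlib

open MeasureTheory ProbabilityTheory Filter
open scoped ENNReal NNReal

noncomputable section

/-- The partial sum `S_n = ∑_{i=1}^n X_i`. -/
def Sn {Ω : Type*} (X : ℕ → Ω → ℝ) (n : ℕ) (ω : Ω) : ℝ :=
  ∑ i ∈ Finset.range n, X i ω

/-- `V_n = (∑_{i=1}^n X_i²)^{1/2}`. -/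
def Vn {Ω : Type*} (X : ℕ → Ω → ℝ) (n : ℕ) (ω : Ω) : ℝ :=
  Real.sqrt (∑ i ∈ Finset.range n, (X i ω) ^ 2)

/-- The sample variance `σ̂_n² = (1/(n-1)) ∑_{i=1}^n (X_i - S_n/n)²`. -/
def sigmaSq {Ω : Type*} (X : ℕ → Ω → ℝ) (n : ℕ) (ω : Ω) : ℝ :=
  (1 / ((n : ℝ) - 1)) * ∑ i ∈ Finset.range n, (X i ω - Sn X n ω / n) ^ 2

/-- Student's t-statistic `T_n = n^{-1/2} σ̂_n^{-1} S_n` when `σ̂_n > 0`, and `0` otherwise. -/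
def Tstat {Ω : Type*} (X : ℕ → Ω → ℝ) (n : ℕ) (ω : Ω) : ℝ :=
  if 0 < sigmaSq X n ω then Sn X n ω / (Real.sqrt n * Real.sqrt (sigmaSq X n ω)) else 0

/-- `U_n* = (S_n/V_n)²` if `V_n > 0` and `(S_n/V_n)² ≠ n`, and `U_n* = 0` otherwise. -/
def Ustar {Ω : Type*} (X : ℕ → Ω → ℝ) (n : ℕ) (ω : Ω) : ℝ :=
  if 0 < Vn X n ω ∧ (Sn X n ω / Vn X n ω) ^ 2 ≠ (n : ℝ) then (Sn X n ω / Vn X n ω) ^ 2 else 0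
lemma sum_centered (x : ℕ → ℝ) (n : ℕ) (c : ℝ) :
    ∑ i ∈ Finset.range n, (x i - c) ^ 2
      = (∑ i ∈ Finset.range n, x i ^ 2) - 2 * c * (∑ i ∈ Finset.range n, x i) + n * c ^ 2 := by
  have h1 : ∀ i ∈ Finset.range n, (x i - c) ^ 2 = x i ^ 2 - 2 * c * x i + c ^ 2 := by
    intro i _; ring
  rw [Finset.sum_congr rfl h1, Finset.sum_add_distrib, Finset.sum_sub_distrib, ← Finset.mul_sum,
    Finset.sum_const, Finset.card_range, nsmul_eq_mul]

lemma pair_sq_sum (x : ℕ → ℝ) (n : ℕ) :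
    ∑ i ∈ Finset.range n, ∑ j ∈ Finset.range n, (x i - x j) ^ 2
      = 2 * n * (∑ i ∈ Finset.range n, x i ^ 2) - 2 * (∑ i ∈ Finset.range n, x i) ^ 2 := by
  have h1 : ∀ i ∈ Finset.range n, ∑ j ∈ Finset.range n, (x i - x j) ^ 2
      = (∑ j ∈ Finset.range n, x j ^ 2) - 2 * x i * (∑ j ∈ Finset.range n, x j)
        + n * x i ^ 2 := by
    intro i _
    have h2 : ∀ j ∈ Finset.range n, (x i - x j) ^ 2 = (x j - x i) ^ 2 := by intro j _; ring
    rw [Finset.sum_congr rfl h2, sum_centered]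
  rw [Finset.sum_congr rfl h1, Finset.sum_add_distrib, Finset.sum_sub_distrib, Finset.sum_const,
    Finset.card_range, ← Finset.mul_sum, ← Finset.sum_mul, ← Finset.mul_sum]
  ring

lemma sigmaSq_eq {Ω : Type*} (X : ℕ → Ω → ℝ) (n : ℕ) (hn : 2 ≤ n) (ω : Ω) :
    sigmaSq X n ω = ((∑ i ∈ Finset.range n, (X i ω) ^ 2) - (Sn X n ω) ^ 2 / n) / ((n:ℝ) - 1) := by
  have hn0 : (n : ℝ) ≠ 0 := by positivity
  rw [sigmaSq, sum_centered (fun i => X i ω) n (Sn X n ω / n)]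
  have h : ∑ i ∈ Finset.range n, X i ω = Sn X n ω := rfl
  rw [h]
  have h2 : (∑ i ∈ Finset.range n, (X i ω)^2) - 2 * (Sn X n ω / n) * Sn X n ω
      + (n:ℝ) * (Sn X n ω / n) ^ 2 = (∑ i ∈ Finset.range n, (X i ω)^2) - (Sn X n ω)^2 / n := by
    field_simp
    ring
  rw [h2, one_div, inv_mul_eq_div]

-- deterministic lemma
lemma exists_close {Ω : Type*} (X : ℕ → Ω → ℝ) (n : ℕ) (hn : 2 ≤ n) (ω : Ω)
    (t : ℝ) (ht : 0 < t) (hT : t ≤ |Tstat X n ω|) :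
    ∃ j ∈ Finset.range n, ∀ i ∈ Finset.range n,
      |X i ω - X j ω| ≤ |X j ω| * (Real.sqrt (2 * n^2 * (n-1)) / t) := by
  classical
  set S := Sn X n ω with hS
  set Q := ∑ i ∈ Finset.range n, (X i ω) ^ 2 with hQ
  have hσ : 0 < sigmaSq X n ω := by
    by_contra hσ
    rw [Tstat, if_neg hσ] at hT
    simp at hT; linarith
  have hn1 : (1:ℝ) ≤ (n:ℝ) - 1 := by
    have : (2:ℝ) ≤ n := by exact_mod_cast hn
    linarith
  have hnpos : (0:ℝ) < n := by positivity
  have hσeq : sigmaSq X n ω = (Q - S^2 / n) / ((n:ℝ) - 1) := sigmaSq_eq X n hn ω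
  have hQS : 0 < Q - S^2 / n := by
    have h := hσ; rw [hσeq, div_pos_iff] at h
    rcases h with ⟨h, _⟩ | ⟨_, h⟩ <;> linarith
  have hQpos : 0 < Q := by
    have : (0:ℝ) ≤ S^2 / n := by positivity
    linarith
  -- T^2 = S^2 / (n * sigmaSq)
  have hTsq : (Tstat X n ω) ^ 2 = S ^ 2 / ((n:ℝ) * sigmaSq X n ω) := by
    rw [Tstat, if_pos hσ]
    rw [div_pow, mul_pow, Real.sq_sqrt hnpos.le, Real.sq_sqrt hσ.le]
  have ht2 : t ^ 2 ≤ S ^ 2 / ((n:ℝ) * sigmaSq X n ω) := by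
    rw [← hTsq]
    calc t ^ 2 ≤ |Tstat X n ω| ^ 2 := by
          apply pow_le_pow_left₀ ht.le hT
      _ = (Tstat X n ω) ^ 2 := sq_abs _
  have hden : 0 < (n:ℝ) * sigmaSq X n ω := by positivity
  have key : t ^ 2 * ((n:ℝ) * Q - S ^ 2) ≤ ((n:ℝ) - 1) * S ^ 2 := by
    have h1 : t ^ 2 * ((n:ℝ) * sigmaSq X n ω) ≤ S ^ 2 := by
      rw [← le_div_iff₀ hden]; exact ht2
    have h2 : (n:ℝ) * sigmaSq X n ω = ((n:ℝ) * Q - S ^ 2) / ((n:ℝ) - 1) := by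
      rw [hσeq]; field_simp
    rw [h2] at h1
    calc t ^ 2 * ((n:ℝ) * Q - S ^ 2)
        = (t ^ 2 * (((n:ℝ) * Q - S ^ 2) / ((n:ℝ) - 1))) * ((n:ℝ) - 1) := by
          field_simp
      _ ≤ S ^ 2 * ((n:ℝ) - 1) := by
          apply mul_le_mul_of_nonneg_right h1 (by linarith)
      _ = ((n:ℝ) - 1) * S ^ 2 := by ring
  have hCS : S ^ 2 ≤ (n:ℝ) * Q := by
    have := sq_sum_le_card_mul_sum_sq (s := Finset.range n) (f := fun i => X i ω)
    simp only [Finset.card_range] at this; exact this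
  have key2 : t ^ 2 * ((n:ℝ) * Q - S ^ 2) ≤ ((n:ℝ) - 1) * ((n:ℝ) * Q) := by
    calc t ^ 2 * ((n:ℝ) * Q - S ^ 2) ≤ ((n:ℝ) - 1) * S ^ 2 := key
      _ ≤ ((n:ℝ) - 1) * ((n:ℝ) * Q) := by nlinarith
  -- pick j maximizing |X j ω|
  obtain ⟨j, hj, hjmax⟩ := Finset.exists_max_image (Finset.range n) (fun i => (X i ω)^2)
    ⟨0, Finset.mem_range.mpr (by omega)⟩
  refine ⟨j, hj, fun i hi => ?_⟩
  have hQj : Q ≤ (n:ℝ) * (X j ω) ^ 2 := by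
    calc Q ≤ ∑ _i ∈ Finset.range n, (X j ω)^2 := Finset.sum_le_sum hjmax
      _ = (n:ℝ) * (X j ω)^2 := by rw [Finset.sum_const, Finset.card_range, nsmul_eq_mul]
  -- (X i - X j)^2 ≤ 2 (nQ - S^2)
  have hterm : (X i ω - X j ω) ^ 2 ≤ 2 * ((n:ℝ) * Q - S ^ 2) := by
    have hmem : (X i ω - X j ω) ^ 2
        ≤ ∑ p ∈ Finset.range n, ∑ q ∈ Finset.range n, (X p ω - X q ω) ^ 2 := by
      have := Finset.single_le_sum (f := fun p => ∑ q ∈ Finset.range n, (X p ω - X q ω) ^ 2)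
        (fun p _ => Finset.sum_nonneg fun q _ => sq_nonneg _) hi
      refine le_trans ?_ this
      exact Finset.single_le_sum (f := fun q => (X i ω - X q ω)^2) (fun q _ => sq_nonneg _) hj
    calc (X i ω - X j ω) ^ 2 ≤ _ := hmem
      _ = 2 * ((n:ℝ) * Q - S ^ 2) := by
          rw [pair_sq_sum (fun i => X i ω) n]; simp only [hS, Sn, hQ]; ring
  have ht2pos : (0:ℝ) < t ^ 2 := by positivity
  have hbound : t ^ 2 * (X i ω - X j ω) ^ 2 ≤ 2 * (n:ℝ)^2 * ((n:ℝ)-1) * (X j ω)^2 := by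
    have b1 : t ^ 2 * (X i ω - X j ω) ^ 2 ≤ t ^ 2 * (2 * ((n:ℝ) * Q - S ^ 2)) :=
      mul_le_mul_of_nonneg_left hterm ht2pos.le
    have b2 : ((n:ℝ) - 1) * ((n:ℝ) * Q) ≤ ((n:ℝ) - 1) * ((n:ℝ) * ((n:ℝ) * (X j ω)^2)) := by
      have := mul_le_mul_of_nonneg_left hQj (show (0:ℝ) ≤ ((n:ℝ)-1) * n by positivity)
      nlinarith
    nlinarith
  have h5 : (X i ω - X j ω) ^ 2 ≤ (X j ω) ^ 2 * (2 * (n:ℝ)^2 * ((n:ℝ)-1)) / t ^ 2 := by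
    rw [le_div_iff₀ ht2pos]
    nlinarith
  calc |X i ω - X j ω| = Real.sqrt ((X i ω - X j ω) ^ 2) := (Real.sqrt_sq_eq_abs _).symm
    _ ≤ Real.sqrt ((X j ω) ^ 2 * (2 * (n:ℝ)^2 * ((n:ℝ)-1)) / t ^ 2) := Real.sqrt_le_sqrt h5
    _ = |X j ω| * (Real.sqrt (2 * (n:ℝ)^2 * ((n:ℝ)-1)) / t) := by
        rw [Real.sqrt_div (by positivity), Real.sqrt_mul (sq_nonneg _), Real.sqrt_sq_eq_abs,
          Real.sqrt_sq ht.le, mul_div_assoc]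

lemma single_event_bound {Ω : Type*} [MeasurableSpace Ω]
    (P : Measure Ω) [IsProbabilityMeasure P]
    (X : ℕ → Ω → ℝ) (hmeas : ∀ i, Measurable (X i))
    (hindep : iIndepFun X P)
    (μ : Measure ℝ) (hdist : ∀ i, P.map (X i) = μ)
    (n : ℕ) (hn : 2 ≤ n)
    (lam C : ℝ)
    (hq : ∀ h ∈ Set.Ioc (0 : ℝ) 1, ∀ x : ℝ,
      μ {y | |y - x| ≤ |x| * h} ≤ ENNReal.ofReal (C * h ^ lam))
    (h : ℝ) (hh : h ∈ Set.Ioc (0:ℝ) 1) (j : ℕ) (hj : j ∈ Finset.range n) :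
    P {ω | ∀ i ∈ (Finset.range n).erase j, |X i ω - X j ω| ≤ |X j ω| * h}
      ≤ ENNReal.ofReal (C * h ^ lam) ^ (n - 1) := by
  classical
  set s := (Finset.range n).erase j with hs
  have hcard : s.card = n - 1 := by
    rw [hs, Finset.card_erase_of_mem hj, Finset.card_range]
  -- independence of X j and the tuple over s
  have hdisj : Disjoint ({j} : Finset ℕ) s := by
    simp [hs, Finset.disjoint_left]
  have hIndep : IndepFun (fun ω (i : ({j} : Finset ℕ)) => X i ω) (fun ω (i : s) => X i ω) P :=
    hindep.indepFun_finset {j} s hdisj hmeas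
  have hIndep2 : IndepFun (X j) (fun ω (i : s) => X i ω) P := by
    have := hIndep.comp (φ := fun v : (({j} : Finset ℕ) → ℝ) => v ⟨j, Finset.mem_singleton_self j⟩)
      (ψ := id) (measurable_pi_apply (X := fun _ : ({j} : Finset ℕ) => ℝ) _) measurable_id
    exact this
  -- measurability of tuple
  have hYmeas : Measurable (fun ω (i : s) => X i ω) := measurable_pi_lambda _ fun i => hmeas i
  set B : ℝ → Set ℝ := fun x => {z : ℝ | |z - x| ≤ |x| * h} with hB
  have hBmeas : ∀ x, MeasurableSet (B x) := by
    intro x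
    exact measurableSet_le (by fun_prop) measurable_const
  set E : Set (ℝ × (s → ℝ)) := {p | ∀ i : s, |p.2 i - p.1| ≤ |p.1| * h} with hE
  have hEmeas : MeasurableSet E := by
    have : E = ⋂ i : s, {p : ℝ × (s → ℝ) | |p.2 i - p.1| ≤ |p.1| * h} := by
      ext p; simp [hE, Set.mem_iInter]
    rw [this]
    refine MeasurableSet.iInter fun i => ?_
    exact measurableSet_le (by fun_prop) (by fun_prop)
  have hpre : {ω | ∀ i ∈ s, |X i ω - X j ω| ≤ |X j ω| * h}
      = (fun ω => (X j ω, fun i : s => X i ω)) ⁻¹' E := by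
    ext ω; simp [hE]
  rw [hpre]
  have hpair : Measurable (fun ω => (X j ω, fun i : s => X i ω)) := (hmeas j).prodMk hYmeas
  rw [← Measure.map_apply hpair hEmeas]
  rw [(indepFun_iff_map_prod_eq_prod_map_map (hmeas j).aemeasurable hYmeas.aemeasurable).mp hIndep2]
  rw [hdist j]
  set ν := P.map (fun ω (i : s) => X i ω) with hν
  have : IsProbabilityMeasure ν := Measure.isProbabilityMeasure_map hYmeas.aemeasurable
  rw [Measure.prod_apply hEmeas]
  have hfiber : ∀ x : ℝ, ν (Prod.mk x ⁻¹' E) ≤ ENNReal.ofReal (C * h ^ lam) ^ (n-1) := by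
    intro x
    have hfib : Prod.mk x ⁻¹' E = Set.univ.pi (fun i : s => B x) := by
      ext y; simp [hE, hB, Set.mem_univ_pi]
    rw [hfib, hν, Measure.map_apply hYmeas (MeasurableSet.univ_pi fun i => hBmeas x)]
    have hpre2 : (fun ω (i : s) => X i ω) ⁻¹' (Set.univ.pi fun i : s => B x)
        = ⋂ i ∈ s, X i ⁻¹' (B x) := by
      ext ω; simp [Set.mem_univ_pi]
    rw [hpre2, hindep.measure_inter_preimage_eq_mul s (sets := fun _ => B x)
      (fun i _ => hBmeas x)]
    calc ∏ i ∈ s, P (X i ⁻¹' B x) ≤ ∏ _i ∈ s, ENNReal.ofReal (C * h ^ lam) := by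
          refine Finset.prod_le_prod' fun i _ => ?_
          rw [← Measure.map_apply (hmeas i) (hBmeas x), hdist i]
          exact hq h hh x
      _ = ENNReal.ofReal (C * h ^ lam) ^ (n-1) := by
          rw [Finset.prod_const, hcard]
  calc ∫⁻ x, ν (Prod.mk x ⁻¹' E) ∂μ ≤ ∫⁻ _x, ENNReal.ofReal (C * h ^ lam) ^ (n-1) ∂μ :=
        lintegral_mono hfiber
    _ = ENNReal.ofReal (C * h ^ lam) ^ (n-1) := by
        rw [lintegral_const]
        have : IsProbabilityMeasure μ := by
          rw [← hdist 0]; exact Measure.isProbabilityMeasure_map (hmeas 0).aemeasurable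
        simp

lemma term_eq (M K C : ℝ) (hM : 0 < M) (hK : 0 < K) (hC : 0 < C) (r lam : ℝ)
    (hr : 0 ≤ r) (m k : ℕ) :
    ((2:ℝ)^(k+1) * M)^r * (C * (K/((2:ℝ)^k * M))^lam)^m
      = ((2*M)^r * (C*(K/M)^lam)^m) * ((2:ℝ)^(r - lam*(m:ℝ)))^k := by
  have h2k : (0:ℝ) < (2:ℝ)^k := by positivity
  have e1 : ((2:ℝ)^(k+1) * M)^r = ((2:ℝ)^k)^r * (2*M)^r := by
    rw [← Real.mul_rpow (by positivity) (by positivity)]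
    ring_nf
  have e2 : (K/((2:ℝ)^k * M))^lam = (((2:ℝ)^k)^lam)⁻¹ * (K/M)^lam := by
    rw [← Real.inv_rpow h2k.le, ← Real.mul_rpow (by positivity) (by positivity)]
    congr 1
    field_simp
  have e3 : (C * ((((2:ℝ)^k)^lam)⁻¹ * (K/M)^lam))^m
      = ((((2:ℝ)^k)^lam)⁻¹)^m * (C * (K/M)^lam)^m := by ring
  have e4 : ((((2:ℝ)^k)^lam)⁻¹)^m = (((2:ℝ)^k)^(lam * (m:ℝ)))⁻¹ := by
    rw [inv_pow]
    congr 1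
    rw [← Real.rpow_natCast (((2:ℝ)^k)^lam) m, ← Real.rpow_mul h2k.le]
  have e5 : ((2:ℝ)^k)^r * (((2:ℝ)^k)^(lam * (m:ℝ)))⁻¹ = ((2:ℝ)^(r - lam*(m:ℝ)))^k := by
    rw [← Real.rpow_neg h2k.le, ← Real.rpow_add h2k]
    rw [show ((2:ℝ)^k : ℝ) = (2:ℝ)^(k:ℝ) from (Real.rpow_natCast 2 k).symm,
      ← Real.rpow_mul (by norm_num : (0:ℝ) ≤ 2)]
    rw [show (((2:ℝ)^(r - lam*(m:ℝ)))^k : ℝ) = ((2:ℝ)^(r - lam*(m:ℝ)))^(k:ℝ) from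
      (Real.rpow_natCast _ k).symm, ← Real.rpow_mul (by norm_num : (0:ℝ) ≤ 2)]
    ring_nf
  calc ((2:ℝ)^(k+1) * M)^r * (C * (K/((2:ℝ)^k * M))^lam)^m
      = (((2:ℝ)^k)^r * (((2:ℝ)^k)^(lam * (m:ℝ)))⁻¹) * ((2*M)^r * (C*(K/M)^lam)^m) := by
        rw [e1, e2, e3, e4]; ring
    _ = ((2*M)^r * (C*(K/M)^lam)^m) * ((2:ℝ)^(r - lam*(m:ℝ)))^k := by rw [e5]; ring

lemma tstat_meas {Ω : Type*} [MeasurableSpace Ω] (X : ℕ → Ω → ℝ) (hmeas : ∀ i, Measurable (X i))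
    (n : ℕ) : Measurable (Tstat X n) := by
  have hSn : Measurable (Sn X n) := by unfold Sn; fun_prop
  have hσ : Measurable (sigmaSq X n) := by unfold sigmaSq Sn; fun_prop
  unfold Tstat
  refine Measurable.ite (measurableSet_lt measurable_const hσ) ?_ measurable_const
  fun_prop

/-- Theorem 4(i) (Theorem `thm3`(i)): if the common distribution `μ` of the i.i.d. `X_i` is
atomless and its concentration function satisfies `q(h) ≤ C·h^λ` on `(0,1]` for some
`λ > r/(n−1)` and `C > 0`, then `E|T_n|^r < ∞`. -/
theorem lintegral_tstat_lt_top_of_concentration {Ω : Type*} [MeasurableSpace Ω]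
    (P : Measure Ω) [IsProbabilityMeasure P]
    (X : ℕ → Ω → ℝ) (hmeas : ∀ i, Measurable (X i))
    (hindep : iIndepFun X P)
    (μ : Measure ℝ) (hdist : ∀ i, P.map (X i) = μ)
    (hcont : ∀ x : ℝ, μ {x} = 0)
    (n : ℕ) (hn : 2 ≤ n) (r : ℝ) (hr : 0 < r)
    (lam C : ℝ) (hlam : r / ((n : ℝ) - 1) < lam) (hC : 0 < C)
    (hq : ∀ h ∈ Set.Ioc (0 : ℝ) 1, ∀ x : ℝ,
      μ {y | |y - x| ≤ |x| * h} ≤ ENNReal.ofReal (C * h ^ lam)) :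
    (∫⁻ ω, ENNReal.ofReal (|Tstat X n ω| ^ r) ∂P) < ⊤ := by
  classical
  have hn2 : (2:ℝ) ≤ (n:ℝ) := by exact_mod_cast hn
  set K := Real.sqrt (2 * (n:ℝ)^2 * ((n:ℝ)-1)) with hKdef
  have hKpos : 0 < K := Real.sqrt_pos.mpr (by nlinarith)
  set M := max K 1 with hMdef
  have hM1 : (1:ℝ) ≤ M := le_max_right _ _
  have hKM : K ≤ M := le_max_left _ _
  have hMpos : 0 < M := by linarith
  have hTM : Measurable (Tstat X n) := tstat_meas X hmeas n
  have hsetmeas : ∀ k : ℕ, MeasurableSet {ω | (2:ℝ)^k * M ≤ |Tstat X n ω|} :=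
    fun k => measurableSet_le measurable_const hTM.abs
  -- tail bound
  have htail : ∀ k : ℕ, P {ω | (2:ℝ)^k * M ≤ |Tstat X n ω|}
      ≤ (n:ℝ≥0∞) * ENNReal.ofReal (C * (K/((2:ℝ)^k * M))^lam) ^ (n-1) := by
    intro k
    set t := (2:ℝ)^k * M with htdef
    have h2k : (1:ℝ) ≤ (2:ℝ)^k := one_le_pow₀ (by norm_num)
    have ht : 0 < t := by positivity
    have htK : K ≤ t := by
      calc K ≤ M := hKM
        _ = 1 * M := (one_mul M).symm
        _ ≤ (2:ℝ)^k * M := by apply mul_le_mul_of_nonneg_right h2k hMpos.le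
    have hh : K / t ∈ Set.Ioc (0:ℝ) 1 := ⟨div_pos hKpos ht, (div_le_one ht).mpr htK⟩
    have hsub : {ω | t ≤ |Tstat X n ω|} ⊆ ⋃ j ∈ Finset.range n,
        {ω | ∀ i ∈ (Finset.range n).erase j, |X i ω - X j ω| ≤ |X j ω| * (K/t)} := by
      intro ω hω
      obtain ⟨j, hj, hcl⟩ := exists_close X n hn ω t ht hω
      exact Set.mem_biUnion hj (fun i hi => hcl i (Finset.mem_of_mem_erase hi))
    calc P {ω | t ≤ |Tstat X n ω|} ≤ P (⋃ j ∈ Finset.range n,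
          {ω | ∀ i ∈ (Finset.range n).erase j, |X i ω - X j ω| ≤ |X j ω| * (K/t)}) :=
        measure_mono hsub
      _ ≤ ∑ j ∈ Finset.range n, P {ω | ∀ i ∈ (Finset.range n).erase j,
          |X i ω - X j ω| ≤ |X j ω| * (K/t)} := measure_biUnion_finset_le _ _
      _ ≤ ∑ _j ∈ Finset.range n, ENNReal.ofReal (C * (K/t)^lam) ^ (n-1) := by
          refine Finset.sum_le_sum fun j hj => ?_
          exact single_event_bound P X hmeas hindep μ hdist n hn lam C hq (K/t) hh j hj
      _ = (n:ℝ≥0∞) * ENNReal.ofReal (C * (K/t)^lam) ^ (n-1) := by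
          rw [Finset.sum_const, Finset.card_range, nsmul_eq_mul]
  -- pointwise bound
  have hpt : ∀ ω, ENNReal.ofReal (|Tstat X n ω| ^ r)
      ≤ ENNReal.ofReal ((2*M)^r) + ∑' k : ℕ, Set.indicator {ω' | (2:ℝ)^k * M ≤ |Tstat X n ω'|}
        (fun _ => ENNReal.ofReal (((2:ℝ)^(k+1) * M)^r)) ω := by
    intro ω
    by_cases hc : |Tstat X n ω| ≤ M
    · refine le_add_right (ENNReal.ofReal_le_ofReal ?_)
      exact Real.rpow_le_rpow (abs_nonneg _) (by nlinarith) hr.le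
    · push_neg at hc
      have hex : ∃ k : ℕ, |Tstat X n ω| < (2:ℝ)^(k+1) * M := by
        obtain ⟨m, hm⟩ := pow_unbounded_of_one_lt (|Tstat X n ω|) (one_lt_two (α := ℝ))
        refine ⟨m, hm.trans_le ?_⟩
        have h1 : ((2:ℝ))^m ≤ (2:ℝ)^(m+1) := by
          apply pow_le_pow_right₀ (by norm_num); omega
        nlinarith [pow_pos (show (0:ℝ) < 2 by norm_num) (m+1)]
      set k := Nat.find hex with hkdef
      have hk1 : |Tstat X n ω| < (2:ℝ)^(k+1) * M := Nat.find_spec hex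
      have hk0 : (2:ℝ)^k * M ≤ |Tstat X n ω| := by
        match hk : k with
        | 0 => simpa using hc.le
        | k' + 1 =>
          have := Nat.find_min hex (by omega : k' < k)
          push_neg at this
          simpa using this
      have hmem : ω ∈ {ω' | (2:ℝ)^k * M ≤ |Tstat X n ω'|} := hk0
      calc ENNReal.ofReal (|Tstat X n ω| ^ r)
          ≤ ENNReal.ofReal (((2:ℝ)^(k+1) * M)^r) :=
            ENNReal.ofReal_le_ofReal (Real.rpow_le_rpow (abs_nonneg _) hk1.le hr.le)
        _ = Set.indicator {ω' | (2:ℝ)^k * M ≤ |Tstat X n ω'|}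
            (fun _ => ENNReal.ofReal (((2:ℝ)^(k+1) * M)^r)) ω := by
              rw [Set.indicator_of_mem hmem]
        _ ≤ ∑' k : ℕ, Set.indicator {ω' | (2:ℝ)^k * M ≤ |Tstat X n ω'|}
            (fun _ => ENNReal.ofReal (((2:ℝ)^(k+1) * M)^r)) ω := ENNReal.le_tsum k
        _ ≤ _ := le_add_self
  -- geometric setup
  have hm1n : ((n-1 : ℕ) : ℝ) = (n:ℝ) - 1 := by
    rw [Nat.cast_sub (by omega)]; norm_num
  have hra : r < lam * ((n-1:ℕ):ℝ) := by
    rw [hm1n]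
    have hpos : (0:ℝ) < (n:ℝ) - 1 := by linarith
    have := (div_lt_iff₀ hpos).mp hlam
    linarith
  set ρ : ℝ := (2:ℝ)^(r - lam * ((n-1:ℕ):ℝ)) with hρdef
  have hρpos : 0 ≤ ρ := Real.rpow_nonneg (by norm_num) _
  have hρlt : ρ < 1 := Real.rpow_lt_one_of_one_lt_of_neg one_lt_two (by linarith)
  set D : ℝ := (2*M)^r * (C*(K/M)^lam)^(n-1) with hDdef
  have hD0 : 0 ≤ D := by positivity
  -- term identity
  have hterm : ∀ k : ℕ, ENNReal.ofReal (((2:ℝ)^(k+1) * M)^r)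
      * ((n:ℝ≥0∞) * ENNReal.ofReal (C * (K/((2:ℝ)^k * M))^lam) ^ (n-1))
      = (n:ℝ≥0∞) * ENNReal.ofReal D * ENNReal.ofReal ρ ^ k := by
    intro k
    have hC2 : 0 ≤ C * (K/((2:ℝ)^k * M))^lam := by positivity
    calc ENNReal.ofReal (((2:ℝ)^(k+1) * M)^r)
        * ((n:ℝ≥0∞) * ENNReal.ofReal (C * (K/((2:ℝ)^k * M))^lam) ^ (n-1))
        = (n:ℝ≥0∞) * ENNReal.ofReal ((((2:ℝ)^(k+1) * M)^r)
            * ((C * (K/((2:ℝ)^k * M))^lam) ^ (n-1))) := by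
          rw [mul_left_comm, ← ENNReal.ofReal_pow hC2, ← ENNReal.ofReal_mul (by positivity)]
      _ = (n:ℝ≥0∞) * ENNReal.ofReal (D * ρ ^ k) := by
          rw [term_eq M K C hMpos hKpos hC r lam hr.le (n-1) k, ← hDdef, ← hρdef]
      _ = (n:ℝ≥0∞) * ENNReal.ofReal D * ENNReal.ofReal ρ ^ k := by
          rw [ENNReal.ofReal_mul hD0, ← ENNReal.ofReal_pow hρpos, mul_assoc]
  -- put it together
  have hint : (∫⁻ ω, ENNReal.ofReal (|Tstat X n ω| ^ r) ∂P)
      ≤ ENNReal.ofReal ((2*M)^r) + ∑' k : ℕ, ENNReal.ofReal (((2:ℝ)^(k+1) * M)^r)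
          * P {ω | (2:ℝ)^k * M ≤ |Tstat X n ω|} := by
    calc (∫⁻ ω, ENNReal.ofReal (|Tstat X n ω| ^ r) ∂P)
        ≤ ∫⁻ ω, (ENNReal.ofReal ((2*M)^r) + ∑' k : ℕ,
            Set.indicator {ω' | (2:ℝ)^k * M ≤ |Tstat X n ω'|}
            (fun _ => ENNReal.ofReal (((2:ℝ)^(k+1) * M)^r)) ω) ∂P := lintegral_mono hpt
      _ = ENNReal.ofReal ((2*M)^r) + ∫⁻ ω, (∑' k : ℕ,
            Set.indicator {ω' | (2:ℝ)^k * M ≤ |Tstat X n ω'|}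
            (fun _ => ENNReal.ofReal (((2:ℝ)^(k+1) * M)^r)) ω) ∂P := by
          rw [lintegral_add_left measurable_const, lintegral_const, measure_univ, mul_one]
      _ = ENNReal.ofReal ((2*M)^r) + ∑' k : ℕ, ∫⁻ ω,
            Set.indicator {ω' | (2:ℝ)^k * M ≤ |Tstat X n ω'|}
            (fun _ => ENNReal.ofReal (((2:ℝ)^(k+1) * M)^r)) ω ∂P := by
          rw [lintegral_tsum fun k => (measurable_const.indicator (hsetmeas k)).aemeasurable]
      _ = ENNReal.ofReal ((2*M)^r) + ∑' k : ℕ, ENNReal.ofReal (((2:ℝ)^(k+1) * M)^r)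
            * P {ω | (2:ℝ)^k * M ≤ |Tstat X n ω|} := by
          congr 1
          refine tsum_congr fun k => ?_
          rw [lintegral_indicator_const (hsetmeas k)]
  have hsum : ∑' k : ℕ, ENNReal.ofReal (((2:ℝ)^(k+1) * M)^r)
      * P {ω | (2:ℝ)^k * M ≤ |Tstat X n ω|}
      ≤ (n:ℝ≥0∞) * ENNReal.ofReal D * (1 - ENNReal.ofReal ρ)⁻¹ := by
    calc ∑' k : ℕ, ENNReal.ofReal (((2:ℝ)^(k+1) * M)^r)
          * P {ω | (2:ℝ)^k * M ≤ |Tstat X n ω|}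
        ≤ ∑' k : ℕ, (n:ℝ≥0∞) * ENNReal.ofReal D * ENNReal.ofReal ρ ^ k := by
          refine ENNReal.tsum_le_tsum fun k => ?_
          rw [← hterm k]
          exact mul_le_mul_right (htail k) _
      _ = (n:ℝ≥0∞) * ENNReal.ofReal D * ∑' k : ℕ, ENNReal.ofReal ρ ^ k :=
          ENNReal.tsum_mul_left
      _ = (n:ℝ≥0∞) * ENNReal.ofReal D * (1 - ENNReal.ofReal ρ)⁻¹ := by
          rw [ENNReal.tsum_geometric]
  have hfin : (n:ℝ≥0∞) * ENNReal.ofReal D * (1 - ENNReal.ofReal ρ)⁻¹ < ⊤ := by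
    refine ENNReal.mul_lt_top (ENNReal.mul_lt_top ?_ ENNReal.ofReal_lt_top) ?_
    · exact ENNReal.natCast_lt_top n
    · rw [ENNReal.inv_lt_top]
      rw [tsub_pos_iff_lt]
      exact ENNReal.ofReal_lt_one.mpr hρlt
  calc (∫⁻ ω, ENNReal.ofReal (|Tstat X n ω| ^ r) ∂P)
      ≤ ENNReal.ofReal ((2*M)^r) + ∑' k : ℕ, ENNReal.ofReal (((2:ℝ)^(k+1) * M)^r)
          * P {ω | (2:ℝ)^k * M ≤ |Tstat X n ω|} := hint
    _ ≤ ENNReal.ofReal ((2*M)^r) + (n:ℝ≥0∞) * ENNReal.ofReal D * (1 - ENNReal.ofReal ρ)⁻¹ :=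
        add_le_add_right hsum _
    _ < ⊤ := ENNReal.add_lt_top.mpr ⟨ENNReal.ofReal_lt_top, hfin⟩

end
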